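/- arXiv:2006.15307 — 2 statements merged into one kernel-verified Lean document; each statement's English description precedes it below -/
import Mathlib

section
/- The set F_y of y-smooth numbers (for increasing y with y(n) ≥ 2) is m-reducible; indeed F_y = F_y · F_y, and moreover F_y is asymptotically equal to F_y · {1, 2}. -/
open Pointwise

def SmoothSet (y : ℕ → ℝ) : Set ℕ :=
  {n : ℕ | 0 < n ∧ ∀ p : ℕ, p.Prime → p ∣ n → (p : ℝ) ≤ y n}

theorem stmt_13 (y : ℕ → ℝ) (hmono : Monotone y) (hy : ∀ n, 2 ≤ y n) :
    SmoothSet y = SmoothSet y * SmoothSet y ∧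
    (SmoothSet y).Nontrivial ∧
    (∃ K : ℕ, SmoothSet y ∩ Set.Ici K =
      (SmoothSet y * ({1, 2} : Set ℕ)) ∩ Set.Ici K) := by
  have hone : (1 : ℕ) ∈ SmoothSet y := by
    refine ⟨one_pos, fun p hp hpd => ?_⟩
    exact absurd (Nat.eq_one_of_dvd_one hpd ▸ hp) Nat.not_prime_one
  have htwo : (2 : ℕ) ∈ SmoothSet y := by
    refine ⟨two_pos, fun p hp hpd => ?_⟩
    have := (Nat.prime_dvd_prime_iff_eq hp Nat.prime_two).mp hpd
    subst this
    exact_mod_cast hy 2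
  have hmul : ∀ a b : ℕ, a ∈ SmoothSet y → b ∈ SmoothSet y → a * b ∈ SmoothSet y := by
    rintro a b ⟨ha, hA⟩ ⟨hb, hB⟩
    refine ⟨Nat.mul_pos ha hb, fun p hp hpd => ?_⟩
    rcases (Nat.Prime.dvd_mul hp).mp hpd with h | h
    · exact (hA p hp h).trans (hmono (Nat.le_mul_of_pos_right a hb))
    · exact (hB p hp h).trans (hmono (Nat.le_mul_of_pos_left b ha))
  have heq : SmoothSet y = SmoothSet y * SmoothSet y := by
    apply Set.eq_of_subset_of_subset
    · intro n hn
      exact ⟨n, hn, 1, hone, mul_one n⟩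
    · rintro _ ⟨a, ha, b, hb, rfl⟩
      exact hmul a b ha hb
  refine ⟨heq, ⟨1, hone, 2, htwo, by norm_num⟩, 0, ?_⟩
  apply Set.eq_of_subset_of_subset
  · rintro n ⟨hn, hn0⟩
    exact ⟨⟨n, hn, 1, by simp, mul_one n⟩, hn0⟩
  · rintro _ ⟨⟨a, ha, b, hb, rfl⟩, h0⟩
    refine ⟨?_, h0⟩
    rcases hb with rfl | rfl
    · simpa using ha
    · exact hmul a 2 ha htwo
end

section
/- For any function y with 2 ≤ y(N) and y(N) < 2^{-32} log N for large N, and any constant c > 0, the inequality c·Ψ(N, y(N))^{1/2} < 2^{8(2π(y(N))+2)} fails for all sufficiently large N; equivalently, Ψ(N, y(N))^{1/2} eventually dominates 2^{16π(y(N)) + 16} up to any fixed constant factor. -/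
noncomputable def Psi (x y : ℝ) : ℕ :=
  {n : ℕ | 1 ≤ n ∧ (n : ℝ) ≤ x ∧ ∀ p : ℕ, p.Prime → p ∣ n → (p : ℝ) ≤ y}.ncard

open Finset Filter Real Nat

lemma psi_lower (x yr : ℝ) (hx : 1 ≤ x) (hy : 2 ≤ yr) (T : ℕ) (hT : yr ^ T ≤ x) :
    (T + ⌊yr⌋₊.primeCounting).choose T ≤ Psi x yr := by
  classical
  set k := ⌊yr⌋₊.primeCounting with hk
  set m := ⌊yr⌋₊ with hm
  have hm2 : 2 ≤ m := Nat.le_floor (by exact_mod_cast hy)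
  have hmy : (m : ℝ) ≤ yr := Nat.floor_le (by linarith)
  have hy1 : (1:ℝ) ≤ yr := by linarith
  -- the primes
  set p : ℕ → ℕ := Nat.nth Nat.Prime with hp
  have hpprime : ∀ i, (p i).Prime := fun i => Nat.prime_nth_prime i
  have hple : ∀ i : Fin k, p i ≤ m := by
    intro i
    have h1 : (i : ℕ) < Nat.count Nat.Prime (m + 1) := i.2
    have h2 := Nat.nth_lt_of_lt_count h1
    exact Nat.lt_succ_iff.mp h2
  have hpinj : Function.Injective p := Nat.nth_injective Nat.infinite_setOf_prime
  -- the map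
  set g : Sym (Fin (k+1)) T → ℕ :=
    fun s => ∏ i : Fin k, p i ^ (Multiset.count i.castSucc (s : Multiset (Fin (k+1)))) with hg
  have hsum : ∀ s : Sym (Fin (k+1)) T,
      ∑ i : Fin (k+1), Multiset.count i (s : Multiset (Fin (k+1))) = T := by
    intro s
    calc ∑ i : Fin (k+1), Multiset.count i (s : Multiset (Fin (k+1)))
        = ∑ i ∈ (s : Multiset (Fin (k+1))).toFinset,
            Multiset.count i (s : Multiset (Fin (k+1))) :=
          (Finset.sum_subset (Finset.subset_univ _)
            (fun i _ hi => Multiset.count_eq_zero.2 (by simpa using hi))).symm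
      _ = Multiset.card (s : Multiset (Fin (k+1))) := Multiset.toFinset_sum_count_eq _
      _ = T := s.2
  have hsumk : ∀ s : Sym (Fin (k+1)) T,
      ∑ i : Fin k, Multiset.count i.castSucc (s : Multiset (Fin (k+1))) ≤ T := by
    intro s
    have h1 : ∑ i : Fin k, Multiset.count i.castSucc (s : Multiset (Fin (k+1)))
        = ∑ j ∈ Finset.univ.image Fin.castSucc,
            Multiset.count j (s : Multiset (Fin (k+1))) := by
      rw [Finset.sum_image (fun a _ b _ h => Fin.castSucc_injective _ h)]
    rw [h1]
    calc ∑ j ∈ Finset.univ.image Fin.castSucc, Multiset.count j (s : Multiset (Fin (k+1)))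
        ≤ ∑ j : Fin (k+1), Multiset.count j (s : Multiset (Fin (k+1))) :=
          Finset.sum_le_sum_of_subset (Finset.subset_univ _)
      _ = T := hsum s
  have hgpos : ∀ s, 0 < g s := fun s =>
    Finset.prod_pos (fun i _ => pow_pos (hpprime i).pos _)
  have hgle : ∀ s, (g s : ℝ) ≤ x := by
    intro s
    have h1 : (g s : ℝ) = ∏ i : Fin k,
        (p i : ℝ) ^ (Multiset.count i.castSucc (s : Multiset (Fin (k+1)))) := by
      push_cast [hg]; rfl
    have h2 : (g s : ℝ) ≤ ∏ i : Fin k,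
        yr ^ (Multiset.count i.castSucc (s : Multiset (Fin (k+1)))) := by
      rw [h1]
      refine Finset.prod_le_prod (fun i _ => by positivity) (fun i _ => ?_)
      refine pow_le_pow_left₀ (by positivity) ?_ _
      calc (p i : ℝ) ≤ (m : ℝ) := by exact_mod_cast hple i
        _ ≤ yr := hmy
    calc (g s : ℝ) ≤ _ := h2
      _ = yr ^ (∑ i : Fin k, Multiset.count i.castSucc (s : Multiset (Fin (k+1)))) :=
        Finset.prod_pow_eq_pow_sum _ _ _
      _ ≤ yr ^ T := pow_le_pow_right₀ hy1 (hsumk s)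
      _ ≤ x := hT
  have hsmooth : ∀ s, ∀ q : ℕ, q.Prime → q ∣ g s → (q : ℝ) ≤ yr := by
    intro s q hq hdvd
    obtain ⟨i, -, hi⟩ := (hq.prime.dvd_finset_prod_iff _).1 hdvd
    have : q = p i := (Nat.prime_dvd_prime_iff_eq hq (hpprime i)).1 (hq.prime.dvd_of_dvd_pow hi)
    rw [this]
    exact le_trans (by exact_mod_cast hple i) hmy
  have hfacg : ∀ (s : Sym (Fin (k+1)) T) (j : Fin k),
      (g s).factorization (p j) = Multiset.count j.castSucc (s : Multiset (Fin (k+1))) := by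
    intro s j
    have h1 : (g s).factorization =
        ∑ i : Fin k, Finsupp.single (p i)
          (Multiset.count i.castSucc (s : Multiset (Fin (k+1)))) := by
      show (∏ i : Fin k, p i ^ (Multiset.count i.castSucc (s : Multiset (Fin (k+1))))).factorization = _
      have h0 := Nat.factorization_prod (S := (Finset.univ : Finset (Fin k)))
        (g := fun i : Fin k => p i ^ (Multiset.count i.castSucc (s : Multiset (Fin (k+1)))))
        (fun i _ => pow_ne_zero _ (hpprime i).pos.ne')
      exact h0.trans (Finset.sum_congr rfl (fun i _ => (hpprime i).factorization_pow))
    rw [h1, Finsupp.finset_sum_apply]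
    rw [Finset.sum_eq_single_of_mem j (Finset.mem_univ j)]
    · exact Finsupp.single_eq_same
    · intro i _ hij
      exact Finsupp.single_eq_of_ne' (fun h => hij (Fin.ext (by
        have := hpinj h; exact_mod_cast congrArg id this)))
  have hinj : Function.Injective g := by
    intro s t hst
    have hcnt : ∀ i : Fin (k+1), Multiset.count i (s : Multiset (Fin (k+1)))
        = Multiset.count i (t : Multiset (Fin (k+1))) := by
      have hcs : ∀ j : Fin k, Multiset.count j.castSucc (s : Multiset (Fin (k+1)))
          = Multiset.count j.castSucc (t : Multiset (Fin (k+1))) := by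
        intro j
        rw [← hfacg s j, ← hfacg t j, hst]
      intro i
      rcases Fin.eq_castSucc_or_eq_last i with ⟨j, rfl⟩ | rfl
      · exact hcs j
      · have h1 := hsum s
        have h2 := hsum t
        rw [Fin.sum_univ_castSucc] at h1 h2
        have : ∀ u : Sym (Fin (k+1)) T, ∑ j : Fin k,
            Multiset.count (Fin.castSucc j) (u : Multiset (Fin (k+1)))
            + Multiset.count (Fin.last k) (u : Multiset (Fin (k+1))) = T := fun u => by
          have := hsum u; rwa [Fin.sum_univ_castSucc] at this
        have hs' := this s
        have ht' := this t
        have heq : ∑ j : Fin k, Multiset.count (Fin.castSucc j) (s : Multiset (Fin (k+1)))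
            = ∑ j : Fin k, Multiset.count (Fin.castSucc j) (t : Multiset (Fin (k+1))) :=
          Finset.sum_congr rfl (fun j _ => hcs j)
        omega
    exact Subtype.ext (Multiset.ext.2 hcnt)
  -- conclude
  set A := {n : ℕ | 1 ≤ n ∧ (n : ℝ) ≤ x ∧ ∀ q : ℕ, q.Prime → q ∣ n → (q : ℝ) ≤ yr} with hA
  have hAfin : A.Finite := by
    refine (Set.finite_Icc 1 ⌊x⌋₊).subset (fun n hn => ?_)
    exact Set.mem_Icc.2 ⟨hn.1, Nat.le_floor hn.2.1⟩
  have hsub : ↑(Finset.image g Finset.univ) ⊆ A := by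
    intro n hn
    simp only [Finset.coe_image, Set.mem_image] at hn
    obtain ⟨s, -, rfl⟩ := hn
    exact ⟨hgpos s, hgle s, hsmooth s⟩
  have hcard : (Finset.image g Finset.univ).card = (T + k).choose T := by
    rw [Finset.card_image_of_injective _ hinj, Finset.card_univ, Sym.card_sym_eq_choose,
      Fintype.card_fin]
    congr 1
    omega
  calc (T + k).choose T = (Finset.image g Finset.univ).card := hcard.symm
    _ = (↑(Finset.image g Finset.univ) : Set ℕ).ncard := (Set.ncard_coe_finset _).symm
    _ ≤ A.ncard := Set.ncard_le_ncard hsub hAfin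


lemma factorial_le_real (k : ℕ) (hk : 1 ≤ k) :
    (k ! : ℝ) * Real.exp ((k : ℝ) - 1) ≤ (k : ℝ) ^ (k + 1) := by
  induction k, hk using Nat.le_induction with
  | base => simp [Nat.factorial]
  | succ n hn ih =>
    have hn0 : (0:ℝ) < n := by exact_mod_cast hn
    have hexp : Real.exp (1/((n:ℝ)+1)) ≤ ((n:ℝ)+1)/n := by
      have h2 := Real.add_one_le_exp (-(1/((n:ℝ)+1)))
      have h3 : (0:ℝ) < 1 - 1/((n:ℝ)+1) := by
        rw [sub_pos, div_lt_one (by positivity)]; linarith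
      have h4 : Real.exp (1/((n:ℝ)+1)) ≤ 1/(1 - 1/((n:ℝ)+1)) := by
        rw [le_div_iff₀ h3]
        have h5 : Real.exp (1/((n:ℝ)+1)) * Real.exp (-(1/((n:ℝ)+1))) = 1 := by
          rw [← Real.exp_add]; simp
        calc Real.exp (1/((n:ℝ)+1)) * (1 - 1/((n:ℝ)+1))
            ≤ Real.exp (1/((n:ℝ)+1)) * Real.exp (-(1/((n:ℝ)+1))) :=
              mul_le_mul_of_nonneg_left (by linarith) (Real.exp_nonneg _)
          _ = 1 := h5
      calc Real.exp (1/((n:ℝ)+1)) ≤ 1/(1 - 1/((n:ℝ)+1)) := h4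
        _ = ((n:ℝ)+1)/n := by field_simp; rw [add_sub_cancel_right, div_self hn0.ne']
    have hkey : Real.exp 1 * (n:ℝ)^(n+1) ≤ ((n:ℝ)+1)^(n+1) := by
      have h6 : Real.exp 1 = (Real.exp (1/((n:ℝ)+1)))^(n+1) := by
        rw [← Real.exp_nat_mul]
        congr 1
        push_cast
        field_simp
      rw [h6]
      calc (Real.exp (1/((n:ℝ)+1)))^(n+1) * (n:ℝ)^(n+1)
          ≤ (((n:ℝ)+1)/n)^(n+1) * (n:ℝ)^(n+1) :=
            mul_le_mul_of_nonneg_right (pow_le_pow_left₀ (Real.exp_nonneg _) hexp _)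
              (by positivity)
        _ = ((n:ℝ)+1)^(n+1) := by
            rw [← mul_pow, div_mul_cancel₀ _ hn0.ne']
    have hfc : ((n+1)! : ℝ) = ((n:ℝ)+1) * (n ! : ℝ) := by
      push_cast [Nat.factorial_succ]; ring
    have hes : Real.exp (((n:ℝ)+1) - 1) = Real.exp ((n:ℝ)-1) * Real.exp 1 := by
      rw [← Real.exp_add]; ring_nf
    have step : ((n+1)! : ℝ) * Real.exp (((n:ℝ)+1) - 1)
        ≤ ((n:ℝ)+1)^(n+2) := by
      calc ((n+1)! : ℝ) * Real.exp (((n:ℝ)+1) - 1)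
          = ((n:ℝ)+1) * ((n ! : ℝ) * Real.exp ((n:ℝ)-1)) * Real.exp 1 := by
            rw [hfc, hes]; ring
        _ ≤ ((n:ℝ)+1) * ((n:ℝ)^(n+1)) * Real.exp 1 := by
            have := Real.exp_pos 1
            gcongr
        _ = ((n:ℝ)+1) * (Real.exp 1 * (n:ℝ)^(n+1)) := by ring
        _ ≤ ((n:ℝ)+1) * (((n:ℝ)+1)^(n+1)) := mul_le_mul_of_nonneg_left hkey (by positivity)
        _ = ((n:ℝ)+1)^(n+2) := by ring
    have hcast : ((n+1:ℕ) : ℝ) = (n:ℝ)+1 := by push_cast; ring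
    rw [hcast]
    exact step

lemma core_large (c : ℝ) (hc : 0 < c) (k : ℕ) (hk1 : 1 ≤ k) (hk : (2:ℝ)^38 / c^2 ≤ k)
    (Z : ℝ) (hZ : (2:ℝ)^32 * k / 1.7 ≤ Z) :
    ((2:ℝ) ^ (8*(2*k+2)) / c)^2 * (k ! : ℝ) ≤ Z ^ k := by
  have hkR : (0:ℝ) < k := by exact_mod_cast hk1
  have he1 : (2.718:ℝ) < Real.exp 1 := by have := Real.exp_one_gt_d9; linarith
  have he2 : Real.exp 1 < 3 := by have := Real.exp_one_lt_d9; linarith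
  -- step 1 : scalar inequality
  have hS1 : (2:ℝ)^32 * Real.exp 1 * k * (1.7:ℝ)^k ≤ c^2 * (Real.exp 1)^k := by
    have h125 : (1:ℝ) + k * 0.25 ≤ (1.25:ℝ)^k := by
      have := one_add_mul_le_pow (by norm_num : (-2:ℝ) ≤ 0.25) k
      linarith
    have hq : ((k:ℝ)/4)^2 ≤ (1.5625:ℝ)^k := by
      have h1 : ((k:ℝ)/4)^2 ≤ ((1.25:ℝ)^k)^2 := by
        apply pow_le_pow_left₀ (by positivity)
        linarith
      have h2 : ((1.25:ℝ)^k)^2 = (1.5625:ℝ)^k := by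
        rw [← pow_mul, mul_comm, pow_mul]
        norm_num
      linarith
    have hck : (2:ℝ)^32 * Real.exp 1 * k ≤ c^2 * ((k:ℝ)/4)^2 := by
      have h3 : (2:ℝ)^38 ≤ c^2 * k := by
        rw [div_le_iff₀ (by positivity)] at hk
        linarith
      nlinarith [mul_le_mul_of_nonneg_right h3 hkR.le, hkR, he2, sq_nonneg c]
    calc (2:ℝ)^32 * Real.exp 1 * k * (1.7:ℝ)^k
        ≤ (c^2 * ((k:ℝ)/4)^2) * (1.7:ℝ)^k := mul_le_mul_of_nonneg_right hck (by positivity)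
      _ ≤ (c^2 * (1.5625:ℝ)^k) * (1.7:ℝ)^k := by
          apply mul_le_mul_of_nonneg_right _ (by positivity)
          exact mul_le_mul_of_nonneg_left hq (by positivity)
      _ = c^2 * ((1.7 * 1.5625:ℝ))^k := by rw [mul_pow]; ring
      _ ≤ c^2 * (Real.exp 1)^k := by
          apply mul_le_mul_of_nonneg_left _ (by positivity)
          apply pow_le_pow_left₀ (by norm_num)
          linarith
  have hfac := factorial_le_real k hk1
  have hE : (0:ℝ) < Real.exp ((k:ℝ)-1) := Real.exp_pos _
  have hEeq : Real.exp ((k:ℝ)-1) = (Real.exp 1)^k / Real.exp 1 := by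
    rw [Real.exp_sub]
    congr 1
    have := Real.exp_nat_mul 1 k
    simpa using this.symm
  have hG : (2:ℝ)^32 * (k ! : ℝ) * (1.7:ℝ)^k ≤ c^2 * (k:ℝ)^k := by
    have hmul : ((2:ℝ)^32 * (k !:ℝ) * (1.7:ℝ)^k) * Real.exp ((k:ℝ)-1)
        ≤ (c^2 * (k:ℝ)^k) * Real.exp ((k:ℝ)-1) := by
      calc ((2:ℝ)^32 * (k !:ℝ) * (1.7:ℝ)^k) * Real.exp ((k:ℝ)-1)
          = (2:ℝ)^32 * (1.7:ℝ)^k * ((k !:ℝ) * Real.exp ((k:ℝ)-1)) := by ring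
        _ ≤ (2:ℝ)^32 * (1.7:ℝ)^k * (k:ℝ)^(k+1) :=
            mul_le_mul_of_nonneg_left hfac (by positivity)
        _ = ((2:ℝ)^32 * k * (1.7:ℝ)^k) * (k:ℝ)^k := by rw [pow_succ]; ring
        _ ≤ (c^2 * (Real.exp 1)^k / Real.exp 1) * (k:ℝ)^k := by
            apply mul_le_mul_of_nonneg_right _ (by positivity)
            rw [le_div_iff₀ (Real.exp_pos 1)]
            calc (2:ℝ)^32 * k * (1.7:ℝ)^k * Real.exp 1
                = (2:ℝ)^32 * Real.exp 1 * k * (1.7:ℝ)^k := by ring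
              _ ≤ c^2 * (Real.exp 1)^k := hS1
        _ = (c^2 * (k:ℝ)^k) * Real.exp ((k:ℝ)-1) := by rw [hEeq]; ring
    exact le_of_mul_le_mul_right hmul hE
  have hZ0 : (0:ℝ) ≤ (2:ℝ)^32 * k / 1.7 := by positivity
  have hZk : ((2:ℝ)^32 * k / 1.7)^k ≤ Z^k := pow_le_pow_left₀ hZ0 hZ k
  have h1 : ((2:ℝ)^(8*(2*k+2)))^2 = ((2:ℝ)^32)^k * (2:ℝ)^32 := by
    rw [← pow_mul, ← pow_mul, ← pow_add]
    congr 1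
    ring
  have hfinal : (2:ℝ)^32 * (k !:ℝ) / c^2 ≤ ((k:ℝ)/1.7)^k := by
    rw [div_pow, div_le_div_iff₀ (by positivity) (by positivity)]
    calc (2:ℝ)^32 * (k !:ℝ) * (1.7:ℝ)^k ≤ c^2 * (k:ℝ)^k := hG
      _ = (k:ℝ)^k * c^2 := by ring
  calc ((2:ℝ)^(8*(2*k+2))/c)^2 * (k !:ℝ)
      = ((2:ℝ)^32)^k * ((2:ℝ)^32 * (k !:ℝ) / c^2) := by rw [div_pow, h1]; ring
    _ ≤ ((2:ℝ)^32)^k * (((k:ℝ)/1.7)^k) := mul_le_mul_of_nonneg_left hfinal (by positivity)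
    _ = ((2:ℝ)^32 * ((k:ℝ)/1.7))^k := (mul_pow _ _ _).symm
    _ = ((2:ℝ)^32 * k/1.7)^k := by rw [mul_div_assoc]
    _ ≤ Z^k := hZk

lemma cheb_nat (m s : ℕ) : (s+1) ^ (m.primeCounting - (s+1)) ≤ 4 ^ m := by
  classical
  set Pm := {p ∈ Finset.range (m+1) | p.Prime} with hPm
  have hcard : Pm.card = m.primeCounting := by
    rw [Nat.primeCounting, Nat.primeCounting', Nat.count_eq_card_filter_range]
  set Q := {p ∈ Pm | s < p} with hQ
  have h1 : (s+1) ^ Q.card ≤ ∏ p ∈ Q, p := by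
    refine Finset.pow_card_le_prod _ _ _ (fun p hp => ?_)
    simp only [hQ, Finset.mem_filter] at hp
    omega
  have h2 : ∏ p ∈ Q, p ≤ ∏ p ∈ Pm, p := by
    refine Finset.prod_le_prod_of_subset_of_one_le' (Finset.filter_subset _ _) ?_
    intro p hp _
    simp only [hPm, Finset.mem_filter] at hp
    exact hp.2.one_lt.le
  have h4 : ∏ p ∈ Pm, p ≤ 4^m := primorial_le_4_pow m
  have h6 : {p ∈ Pm | ¬ s < p}.card ≤ s+1 := by
    refine le_trans (Finset.card_le_card (t := Finset.range (s+1)) ?_) (by simp)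
    intro p hp
    simp only [Finset.mem_filter] at hp
    simp only [Finset.mem_range]
    omega
  have hsplit := Finset.card_filter_add_card_filter_not
    (s := Pm) (p := fun p => s < p)
  have hsplit' : Q.card + {p ∈ Pm | ¬ s < p}.card = Pm.card := hsplit
  have h5 : m.primeCounting ≤ Q.card + (s+1) := by
    rw [← hcard]
    omega
  calc (s+1) ^ (m.primeCounting - (s+1))
      ≤ (s+1) ^ Q.card := Nat.pow_le_pow_right (by omega) (by omega)
    _ ≤ ∏ p ∈ Q, p := h1
    _ ≤ ∏ p ∈ Pm, p := h2
    _ ≤ 4^m := h4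

lemma cheb_real (m : ℕ) (hm : 2 ≤ m) :
    (m.primeCounting : ℝ) ≤ ((⌊(m:ℝ) ^ (0.9:ℝ)⌋₊ : ℝ) + 1)
      + (m * Real.log 4) / (0.9 * Real.log m) := by
  set s := ⌊(m:ℝ)^(0.9:ℝ)⌋₊ with hs
  have hm0 : (0:ℝ) < m := by positivity
  have hm1 : (1:ℝ) < m := by exact_mod_cast hm
  have hlogm : 0 < Real.log m := Real.log_pos hm1
  have hlog4 : 0 < Real.log 4 := Real.log_pos (by norm_num)
  have hs1 : (m:ℝ)^(0.9:ℝ) < (s:ℝ) + 1 := Nat.lt_floor_add_one _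
  have hlogs : 0.9 * Real.log m ≤ Real.log ((s:ℝ)+1) := by
    calc 0.9 * Real.log m = Real.log ((m:ℝ)^(0.9:ℝ)) := (Real.log_rpow hm0 _).symm
      _ ≤ Real.log ((s:ℝ)+1) := Real.log_le_log (by positivity) hs1.le
  by_cases hc : m.primeCounting ≤ s+1
  · have : (m.primeCounting : ℝ) ≤ (s:ℝ)+1 := by exact_mod_cast hc
    have hpos : 0 ≤ (m * Real.log 4) / (0.9 * Real.log m) := by positivity
    linarith
  · push_neg at hc
    have hnat := cheb_nat m s
    have hreal : (((s+1:ℕ)):ℝ) ^ (m.primeCounting - (s+1)) ≤ (4:ℝ)^m := by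
      exact_mod_cast hnat
    have hlog2 : ((m.primeCounting - (s+1) : ℕ):ℝ) * Real.log ((s:ℝ)+1)
        ≤ (m:ℝ) * Real.log 4 := by
      calc ((m.primeCounting - (s+1) : ℕ):ℝ) * Real.log ((s:ℝ)+1)
          = Real.log ((((s+1:ℕ)):ℝ) ^ (m.primeCounting - (s+1))) := by
            rw [Real.log_pow]; push_cast; ring
        _ ≤ Real.log ((4:ℝ)^m) := Real.log_le_log (by positivity) hreal
        _ = (m:ℝ) * Real.log 4 := by rw [Real.log_pow]
    have hcast : ((m.primeCounting - (s+1):ℕ):ℝ) = (m.primeCounting:ℝ) - ((s:ℝ)+1) := by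
      rw [Nat.cast_sub (by omega)]
      push_cast; ring
    rw [hcast] at hlog2
    have hd : ((m.primeCounting:ℝ) - ((s:ℝ)+1)) * (0.9 * Real.log m)
        ≤ (m:ℝ) * Real.log 4 := by
      have hnn : (0:ℝ) ≤ (m.primeCounting:ℝ) - ((s:ℝ)+1) := by
        have : ((s+1:ℕ):ℝ) ≤ (m.primeCounting:ℝ) := by exact_mod_cast hc.le
        push_cast at this
        linarith
      calc ((m.primeCounting:ℝ) - ((s:ℝ)+1)) * (0.9 * Real.log m)
          ≤ ((m.primeCounting:ℝ) - ((s:ℝ)+1)) * Real.log ((s:ℝ)+1) :=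
            mul_le_mul_of_nonneg_left hlogs hnn
        _ ≤ (m:ℝ) * Real.log 4 := hlog2
    rw [← sub_le_iff_le_add']
    rw [le_div_iff₀ (by positivity)]
    linarith

lemma cheb_ev : ∀ᶠ m : ℕ in atTop,
    (Nat.primeCounting m : ℝ) * Real.log ((m:ℝ)+1) ≤ 1.7 * m := by
  have E1 : ∀ᶠ x : ℝ in atTop, Real.log x ≤ 0.025 * x^(0.1:ℝ) := by
    have h := (isLittleO_log_rpow_atTop (by norm_num : (0:ℝ) < 0.1)).def
      (by norm_num : (0:ℝ) < 0.025)
    filter_upwards [h, eventually_ge_atTop (1:ℝ)] with x hx hx1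
    rw [Real.norm_eq_abs, Real.norm_eq_abs, abs_of_nonneg (Real.log_nonneg hx1),
      abs_of_nonneg (Real.rpow_nonneg (by linarith) _)] at hx
    exact hx
  have E2 : Tendsto (fun x:ℝ => x^(0.1:ℝ)) atTop atTop :=
    tendsto_rpow_atTop (by norm_num)
  have hE : ∀ᶠ x : ℝ in atTop,
      (x^(0.9:ℝ)+1) * (Real.log x + 1) + 1.5404*x/Real.log x ≤ 0.1596 * x := by
    filter_upwards [E1, E2.eventually_ge_atTop 34, Real.tendsto_log_atTop.eventually_ge_atTop 31,
      eventually_ge_atTop (100:ℝ)] with x h1 h2 h3 h4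
    have hx1 : (1:ℝ) ≤ x := by linarith
    have hx0 : (0:ℝ) < x := by linarith
    have hxsplit : x^(0.9:ℝ) * x^(0.1:ℝ) = x := by
      rw [← Real.rpow_add hx0]
      norm_num
    have h90 : (0:ℝ) ≤ x^(0.9:ℝ) := Real.rpow_nonneg hx0.le _
    have h10 : (0:ℝ) ≤ x^(0.1:ℝ) := Real.rpow_nonneg hx0.le _
    have ha : x^(0.9:ℝ) * Real.log x ≤ 0.025 * x := by
      calc x^(0.9:ℝ) * Real.log x ≤ x^(0.9:ℝ) * (0.025 * x^(0.1:ℝ)) :=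
            mul_le_mul_of_nonneg_left h1 h90
        _ = 0.025 * (x^(0.9:ℝ) * x^(0.1:ℝ)) := by ring
        _ = 0.025 * x := by rw [hxsplit]
    have hb : x^(0.9:ℝ) ≤ 0.03 * x := by
      have : x^(0.9:ℝ) * 34 ≤ x^(0.9:ℝ) * x^(0.1:ℝ) := mul_le_mul_of_nonneg_left h2 h90
      rw [hxsplit] at this
      linarith
    have hc : Real.log x ≤ 0.025 * x := by
      have hxx : x^(0.1:ℝ) ≤ x := by
        calc x^(0.1:ℝ) ≤ x^(1:ℝ) :=
              Real.rpow_le_rpow_of_exponent_le hx1 (by norm_num)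
          _ = x := Real.rpow_one x
      nlinarith
    have hd : 1.5404*x/Real.log x ≤ 0.05 * x := by
      rw [div_le_iff₀ (by linarith)]
      nlinarith
    nlinarith
  have hEN := (tendsto_natCast_atTop_atTop (R := ℝ)).eventually hE
  filter_upwards [hEN, eventually_ge_atTop 2] with m hm hm2
  have hm1 : (1:ℝ) < m := by exact_mod_cast hm2
  have hm0 : (0:ℝ) < m := by linarith
  have hlogm : 0 < Real.log m := Real.log_pos hm1
  have hcr := cheb_real m hm2
  set s := ⌊(m:ℝ)^(0.9:ℝ)⌋₊ with hs
  have hfl : ((s:ℕ):ℝ) ≤ (m:ℝ)^(0.9:ℝ) := Nat.floor_le (by positivity)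
  have hlogm1 : Real.log ((m:ℝ)+1) ≤ Real.log m + 1 := by
    have hlog2 : Real.log 2 ≤ 1 := by
      have := Real.log_two_lt_d9; linarith
    calc Real.log ((m:ℝ)+1) ≤ Real.log (2*m) :=
          Real.log_le_log (by linarith) (by linarith)
      _ = Real.log 2 + Real.log m := Real.log_mul (by norm_num) (by linarith)
      _ ≤ Real.log m + 1 := by linarith
  have hlogm1' : 0 ≤ Real.log ((m:ℝ)+1) := Real.log_nonneg (by linarith)
  have hlog4 : Real.log 4 ≤ 1.38630 := by
    have h2 := Real.log_two_lt_d9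
    calc Real.log 4 = Real.log (2^2) := by norm_num
      _ = 2 * Real.log 2 := by rw [Real.log_pow]; push_cast; ring
      _ ≤ 1.38630 := by linarith
  have hlog40 : 0 ≤ Real.log 4 := Real.log_nonneg (by norm_num)
  have hRHSnn : 0 ≤ ((s:ℝ) + 1) + (m * Real.log 4) / (0.9 * Real.log m) := by positivity
  have step1 : (Nat.primeCounting m : ℝ) * Real.log ((m:ℝ)+1)
      ≤ (((s:ℝ) + 1) + (m * Real.log 4) / (0.9 * Real.log m)) * (Real.log m + 1) :=
    mul_le_mul hcr hlogm1 hlogm1' hRHSnn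
  have step2 : (m * Real.log 4) / (0.9 * Real.log m) * (Real.log m + 1)
      ≤ 1.5404 * ((m:ℝ) + (m:ℝ)/Real.log m) := by
    have hexp : (m * Real.log 4) / (0.9 * Real.log m) * (Real.log m + 1)
        = (Real.log 4 / 0.9) * ((m:ℝ) + (m:ℝ)/Real.log m) := by
      field_simp
    rw [hexp]
    have hcoef : Real.log 4 / 0.9 ≤ 1.5404 := by
      rw [div_le_iff₀ (by norm_num)]
      linarith
    have hsumnn : 0 ≤ (m:ℝ) + (m:ℝ)/Real.log m := by positivity
    exact mul_le_mul_of_nonneg_right hcoef hsumnn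
  have step3 : ((s:ℝ)+1) * (Real.log m + 1) ≤ ((m:ℝ)^(0.9:ℝ)+1) * (Real.log m + 1) := by
    apply mul_le_mul_of_nonneg_right _ (by linarith)
    linarith
  have hdm : 1.5404 * ((m:ℝ)/Real.log m) = 1.5404*(m:ℝ)/Real.log m := by ring
  calc (Nat.primeCounting m : ℝ) * Real.log ((m:ℝ)+1)
      ≤ (((s:ℝ) + 1) + (m * Real.log 4) / (0.9 * Real.log m)) * (Real.log m + 1) := step1
    _ = ((s:ℝ)+1) * (Real.log m + 1)
        + (m * Real.log 4) / (0.9 * Real.log m) * (Real.log m + 1) := by ring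
    _ ≤ ((m:ℝ)^(0.9:ℝ)+1) * (Real.log m + 1) + 1.5404 * ((m:ℝ) + (m:ℝ)/Real.log m) := by
        linarith
    _ = (((m:ℝ)^(0.9:ℝ)+1) * (Real.log m + 1) + 1.5404*(m:ℝ)/Real.log m) + 1.5404*(m:ℝ) := by
        rw [← hdm]; ring
    _ ≤ 0.1596 * (m:ℝ) + 1.5404 * (m:ℝ) := by linarith
    _ = 1.7 * m := by ring
theorem stmt_17 (y : ℕ → ℝ) (h2 : ∀ N, 2 ≤ y N)
    (hupper : ∀ᶠ N : ℕ in Filter.atTop, y N < 2 ^ (-32 : ℤ) * Real.log N)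
    (c : ℝ) (hc : 0 < c) :
    ∀ᶠ N : ℕ in Filter.atTop,
      ¬ (c * Real.sqrt (Psi N (y N)) <
          (2 : ℝ) ^ (8 * (2 * Nat.primeCounting ⌊y N⌋₊ + 2))) := by
  obtain ⟨M₀, hM₀⟩ := Filter.eventually_atTop.mp cheb_ev
  set K : ℕ := ⌈(2:ℝ)^38 / c^2⌉₊ + 1 with hK
  set P : ℕ := Nat.nth Nat.Prime K with hP
  set Y₀ : ℕ := max (max P (M₀+1)) 3 with hY₀
  set K₂ : ℕ := Nat.primeCounting Y₀ with hK₂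
  have hY3 : 3 ≤ Y₀ := le_max_right _ _
  have hY₀1 : (1:ℝ) < (Y₀:ℕ) := by exact_mod_cast lt_of_lt_of_le (by norm_num) hY3
  have hlogY₀ : (0:ℝ) < Real.log Y₀ := Real.log_pos hY₀1
  set C₀ : ℝ := ((2:ℝ)^(8*(2*K₂+2))/c)^2 * (K₂ ! : ℝ) * Real.log Y₀ with hC₀
  have hlogN : ∀ᶠ N : ℕ in Filter.atTop, C₀ ≤ Real.log N :=
    (Real.tendsto_log_atTop.comp (tendsto_natCast_atTop_atTop)).eventually_ge_atTop C₀
  filter_upwards [hupper, hlogN, eventually_ge_atTop 2] with N hup hlgN hN2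
  set yN := y N with hyN
  have hy2 : 2 ≤ yN := h2 N
  set m : ℕ := ⌊yN⌋₊ with hm
  set k : ℕ := Nat.primeCounting m with hk
  rw [not_lt]
  have hm2 : 2 ≤ m := Nat.le_floor (by exact_mod_cast hy2)
  have hpi2 : Nat.primeCounting 2 = 1 := by decide
  have hk1 : 1 ≤ k := by
    calc 1 = Nat.primeCounting 2 := hpi2.symm
      _ ≤ k := Nat.monotone_primeCounting hm2
  have hyN1 : (1:ℝ) < yN := lt_of_lt_of_le one_lt_two hy2
  have hyN0 : (0:ℝ) < yN := by linarith
  have hlogy : 0 < Real.log yN := Real.log_pos hyN1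
  have hN1R : (1:ℝ) ≤ (N:ℝ) := by exact_mod_cast le_trans one_le_two hN2
  have h32 : (2:ℝ)^(32:ℕ) * yN < Real.log N := by
    rw [show ((2:ℝ)^(-32:ℤ)) = ((2:ℝ)^(32:ℕ))⁻¹ by norm_num, inv_mul_eq_div,
      lt_div_iff₀ (by positivity)] at hup
    linarith
  have hlogN0 : 0 < Real.log N := lt_trans (by positivity) h32
  set T : ℕ := ⌊Real.log N / Real.log yN⌋₊ with hT
  have hTle : yN ^ T ≤ (N:ℝ) := by
    have hfl : (T:ℝ) ≤ Real.log N / Real.log yN :=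
      Nat.floor_le (by positivity)
    have h1 : (T:ℝ) * Real.log yN ≤ Real.log N := by
      calc (T:ℝ) * Real.log yN ≤ (Real.log N / Real.log yN) * Real.log yN :=
            mul_le_mul_of_nonneg_right hfl hlogy.le
        _ = Real.log N := div_mul_cancel₀ _ hlogy.ne'
    calc yN ^ T = Real.exp (Real.log (yN ^ T)) := (Real.exp_log (by positivity)).symm
      _ = Real.exp ((T:ℝ) * Real.log yN) := by rw [Real.log_pow]
      _ ≤ Real.exp (Real.log N) := Real.exp_le_exp.2 h1
      _ = (N:ℝ) := Real.exp_log (by linarith)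
  have hPsiC := psi_lower (N:ℝ) yN hN1R hy2 T hTle
  have hPsiR : ((T:ℝ)+1)^k ≤ (k ! : ℝ) * (Psi (N:ℝ) yN : ℝ) := by
    have hcs : (T + k).choose T = (T + k).choose k := by
      have h := Nat.choose_symm (Nat.le_add_left k T)
      rwa [Nat.add_sub_cancel] at h
    have hnat : (T+1)^k ≤ k ! * Psi (N:ℝ) yN := by
      calc (T+1)^k = (T+k+1-k)^k := by congr 1; omega
        _ ≤ (T+k).descFactorial k := Nat.pow_sub_le_descFactorial _ _
        _ = k ! * (T+k).choose k := Nat.descFactorial_eq_factorial_mul_choose _ _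
        _ = k ! * (T+k).choose T := by rw [hcs]
        _ ≤ k ! * Psi (N:ℝ) yN := Nat.mul_le_mul_left _ hPsiC
    exact_mod_cast hnat
  have hT1 : Real.log N / Real.log yN ≤ (T:ℝ)+1 := (Nat.lt_floor_add_one _).le
  have hT1pos : (1:ℝ) ≤ (T:ℝ)+1 := by
    have h0 : (0:ℝ) ≤ (T:ℝ) := Nat.cast_nonneg T
    linarith
  have hkey : ((2:ℝ)^(8*(2*k+2))/c)^2 * (k ! : ℝ) ≤ ((T:ℝ)+1)^k := by
    rcases lt_or_ge yN (Y₀:ℝ) with hsmall | hlarge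
    · -- small y case
      have hmY : m ≤ Y₀ := by
        have h1 : (m:ℝ) ≤ yN := Nat.floor_le hyN0.le
        exact_mod_cast (lt_of_le_of_lt h1 hsmall).le
      have hkK2 : k ≤ K₂ := Nat.monotone_primeCounting hmY
      have hQ1 : ((2:ℝ)^(8*(2*k+2))/c)^2 ≤ ((2:ℝ)^(8*(2*K₂+2))/c)^2 := by
        apply pow_le_pow_left₀ (by positivity)
        have h' : (2:ℝ)^(8*(2*k+2)) ≤ (2:ℝ)^(8*(2*K₂+2)) :=
          pow_le_pow_right₀ one_le_two (by omega)
        gcongr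
      have hQ2 : (k ! : ℝ) ≤ (K₂ ! : ℝ) := by exact_mod_cast Nat.factorial_le hkK2
      have h5 : Real.log yN ≤ Real.log Y₀ := Real.log_le_log hyN0 hsmall.le
      have h7 : ((2:ℝ)^(8*(2*K₂+2))/c)^2 * (K₂ ! : ℝ) ≤ Real.log N / Real.log Y₀ := by
        rw [le_div_iff₀ hlogY₀]
        exact hlgN
      have h6 : Real.log N / Real.log Y₀ ≤ Real.log N / Real.log yN := by
        gcongr

      calc ((2:ℝ)^(8*(2*k+2))/c)^2 * (k ! : ℝ)
          ≤ ((2:ℝ)^(8*(2*K₂+2))/c)^2 * (K₂ ! : ℝ) :=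
            mul_le_mul hQ1 hQ2 (by positivity) (by positivity)
        _ ≤ (T:ℝ)+1 := by linarith
        _ ≤ ((T:ℝ)+1)^k := le_self_pow₀ hT1pos (by omega)
    · -- large y case
      have hPY : (P:ℝ) ≤ (Y₀:ℝ) := by
        exact_mod_cast le_max_of_le_left (le_max_left P (M₀+1))
      have hPm : P ≤ m := Nat.le_floor (le_trans hPY hlarge)
      have hpiP : Nat.primeCounting P = K + 1 := by
        show Nat.primeCounting' (P+1) = K + 1
        rw [Nat.primeCounting', Nat.count_succ, Nat.count_nth_of_infinite
          Nat.infinite_setOf_prime, if_pos (Nat.prime_nth_prime K)]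
      have hkK : K + 1 ≤ k := by
        calc K + 1 = Nat.primeCounting P := hpiP.symm
          _ ≤ k := Nat.monotone_primeCounting hPm
      have hM₀m : M₀ ≤ m := by
        have h1 : ((M₀+1:ℕ):ℝ) ≤ (Y₀:ℝ) := by
          exact_mod_cast le_max_of_le_left (le_max_right P (M₀+1))
        have := Nat.le_floor (le_trans h1 hlarge)
        omega
      have hklog : (k:ℝ) * Real.log yN ≤ 1.7 * yN := by
        have h9 := hM₀ m hM₀m
        have h10 : Real.log yN ≤ Real.log ((m:ℝ)+1) :=
          Real.log_le_log hyN0 (Nat.lt_floor_add_one yN).le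
        have h11 : (m:ℝ) ≤ yN := Nat.floor_le hyN0.le
        calc (k:ℝ) * Real.log yN ≤ (k:ℝ) * Real.log ((m:ℝ)+1) :=
              mul_le_mul_of_nonneg_left h10 (by positivity)
          _ ≤ 1.7 * (m:ℝ) := h9
          _ ≤ 1.7 * yN := by linarith
      have hZ : (2:ℝ)^32 * k / 1.7 ≤ (T:ℝ)+1 := by
        have h12 : (2:ℝ)^32 * k / 1.7 * Real.log yN ≤ Real.log N := by
          calc (2:ℝ)^32 * k / 1.7 * Real.log yN
              = ((2:ℝ)^32/1.7) * ((k:ℝ) * Real.log yN) := by ring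
            _ ≤ ((2:ℝ)^32/1.7) * (1.7 * yN) :=
                mul_le_mul_of_nonneg_left hklog (by positivity)
            _ = (2:ℝ)^32 * yN := by ring
            _ ≤ Real.log N := h32.le
        calc (2:ℝ)^32 * k / 1.7
            = ((2:ℝ)^32 * k / 1.7 * Real.log yN) / Real.log yN := by
              field_simp
          _ ≤ Real.log N / Real.log yN := by gcongr
          _ ≤ (T:ℝ)+1 := hT1
      have hkc : (2:ℝ)^38 / c^2 ≤ (k:ℝ) := by
        calc (2:ℝ)^38/c^2 ≤ (⌈(2:ℝ)^38/c^2⌉₊:ℝ) := Nat.le_ceil _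
          _ ≤ (k:ℝ) := by exact_mod_cast (by omega : ⌈(2:ℝ)^38/c^2⌉₊ ≤ k)
      exact core_large c hc k hk1 hkc ((T:ℝ)+1) hZ
  -- wrap up
  have hfk : (0:ℝ) < (k ! : ℝ) := by exact_mod_cast Nat.factorial_pos k
  have hPsiGe : ((2:ℝ)^(8*(2*k+2))/c)^2 ≤ ((Psi (N:ℝ) yN : ℕ) : ℝ) := by
    have h13 : ((2:ℝ)^(8*(2*k+2))/c)^2 * (k ! : ℝ)
        ≤ ((Psi (N:ℝ) yN : ℕ) : ℝ) * (k ! : ℝ) := by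
      calc ((2:ℝ)^(8*(2*k+2))/c)^2 * (k ! : ℝ) ≤ ((T:ℝ)+1)^k := hkey
        _ ≤ (k ! : ℝ) * ((Psi (N:ℝ) yN : ℕ) : ℝ) := hPsiR
        _ = ((Psi (N:ℝ) yN : ℕ) : ℝ) * (k ! : ℝ) := mul_comm _ _
    exact le_of_mul_le_mul_right h13 hfk
  have hsq : (2:ℝ)^(8*(2*k+2))/c ≤ Real.sqrt ((Psi (N:ℝ) yN : ℕ) : ℝ) :=
    Real.le_sqrt_of_sq_le hPsiGe
  calc (2:ℝ)^(8*(2*k+2)) = c * ((2:ℝ)^(8*(2*k+2))/c) := by field_simp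
    _ ≤ c * Real.sqrt ((Psi (N:ℝ) yN : ℕ) : ℝ) :=
        mul_le_mul_of_nonneg_left hsq hc.le
end
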